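/- Let x, y ∈ B̂^× and v, w ∈ V. Assume that Cl(R) is finite, that every Γ_z (z ∈ B̂^×) is finite, and that every set Γ_{x,z} and Γ_{y,z} (z ∈ B̂^×) is finite, so that φ_{x,v}, φ_{y,w} and the height pairing are defined. Then ⟨⟨φ_{x,v}, φ_{y,w}⟩⟩ = Σ_{γ ∈ Γ_{x,y}} ⟨v·γ, w⟩. -/

import Mathlib

open NumberField Quaternion IsDedekindDomain

noncomputable section

/-- The finite adele ring of a number field. -/
abbrev Adeles (F : Type*) [Field F] [NumberField F] : Type _ :=
  FiniteAdeleRing (𝓞 F) F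

/-- The adelization `B ⊗_F 𝔸`, modelled as a quaternion algebra over the adeles. -/
abbrev Bhat (F : Type*) [Field F] [NumberField F] (a b : F) : Type _ :=
  ℍ[Adeles F, algebraMap F (Adeles F) a, algebraMap F (Adeles F) b]

/-- The canonical quaternionic basis of `Bhat`. -/
def quatBasis (F : Type*) [Field F] [NumberField F] (a b : F) :
    QuaternionAlgebra.Basis (Bhat F a b) a 0 b where
  i := ⟨0, 1, 0, 0⟩
  j := ⟨0, 0, 1, 0⟩
  k := ⟨0, 0, 0, 1⟩
  i_mul_i := by
    ext <;> simp [QuaternionAlgebra.ext_iff, Algebra.smul_def] <;> rfl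
  j_mul_j := by
    ext <;> simp [QuaternionAlgebra.ext_iff, Algebra.smul_def] <;> rfl
  i_mul_j := by
    ext <;> simp
  j_mul_i := by
    ext <;> simp

/-- The canonical embedding `B → B̂`. -/
def iotaB (F : Type*) [Field F] [NumberField F] (a b : F) :
    ℍ[F, a, b] →ₐ[F] Bhat F a b :=
  (quatBasis F a b).liftHom

/-- The integral adeles `Ô` inside the finite adeles. -/
def intAdeles (F : Type*) [Field F] [NumberField F] : Set (Adeles F) :=
  {x | ∀ v : HeightOneSpectrum (𝓞 F), x v ∈ v.adicCompletionIntegers F}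

variable {F : Type*} [Field F] [NumberField F] {a b : F}

/-- `R̂`, the image of `R ⊗_𝒪 Ô` in `B̂`. -/
def Rhat (R : Subring ℍ[F, a, b]) : Subring (Bhat F a b) :=
  Subring.closure
    {z | ∃ r ∈ R, ∃ o ∈ intAdeles F,
      z = algebraMap (Adeles F) (Bhat F a b) o * iotaB F a b r}

/-- `R̂ˣ` as a subgroup of `B̂ˣ`. -/
def Uhat (R : Subring ℍ[F, a, b]) : Subgroup (Bhat F a b)ˣ :=
  (Units.map (Rhat R).subtype.toMonoidHom).range

/-- The embedding `B^× → B̂^×`. -/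
def gmap (F : Type*) [Field F] [NumberField F] (a b : F) :
    ℍ[F, a, b]ˣ →* (Bhat F a b)ˣ :=
  Units.map (iotaB F a b).toRingHom.toMonoidHom

/-- `𝒪^×` as a subgroup of `B^×`. -/
def OunitsB (F : Type*) [Field F] [NumberField F] (a b : F) : Subgroup ℍ[F, a, b]ˣ :=
  (Units.map ((algebraMap F ℍ[F, a, b]).comp (algebraMap (𝓞 F) F)).toMonoidHom).range

/-- The set `B^× ∩ x⁻¹ R̂^× y` (inside `B^×`). -/
def GammaSet (R : Subring ℍ[F, a, b]) (x y : (Bhat F a b)ˣ) : Set ℍ[F, a, b]ˣ :=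
  {γ | ∃ u ∈ Uhat R, gmap F a b γ = x⁻¹ * u * y}

/-- `T` is a (finite) set of representatives for `Γ_{x,y} = (B^× ∩ x⁻¹ R̂^× y)/𝒪^×`. -/
def IsGammaReps (R : Subring ℍ[F, a, b]) (x y : (Bhat F a b)ˣ)
    (T : Finset ℍ[F, a, b]ˣ) : Prop :=
  ↑T ⊆ GammaSet R x y ∧
    ∀ γ ∈ GammaSet R x y, ∃! γ' : ℍ[F, a, b]ˣ,
      γ' ∈ T ∧ ∃ ε ∈ OunitsB F a b, γ = γ' * ε

variable {V : Type*} [AddCommGroup V] [Module ℂ V]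

/-- `(V, act)` is a unitary right representation of `B^×/F^×`. -/
def IsWeightRep (F : Type*) [Field F] [NumberField F] (a b : F)
    (act : V → ℍ[F, a, b]ˣ → V) : Prop :=
  (∀ v, act v 1 = v) ∧
  (∀ v γ₁ γ₂, act (act v γ₁) γ₂ = act v (γ₁ * γ₂)) ∧
  (∀ γ, IsLinearMap ℂ (fun v => act v γ)) ∧
  (∀ (v : V) (c : Fˣ), act v (Units.map (algebraMap F ℍ[F, a, b]).toMonoidHom c) = v)

/-- `φ` is the quaternionic modular form `φ_{x,v}`. -/
def IsPhi (R : Subring ℍ[F, a, b]) (act : V → ℍ[F, a, b]ˣ → V)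
    (x : (Bhat F a b)ˣ) (v : V) (φ : (Bhat F a b)ˣ → V) : Prop :=
  ∀ y : (Bhat F a b)ˣ, ∃ T : Finset ℍ[F, a, b]ˣ,
    IsGammaReps R x y T ∧ φ y = ∑ γ ∈ T, act v γ

/-- `φ` is a quaternionic modular form of weight `act` and level `R`. -/
def IsQMF (R : Subring ℍ[F, a, b]) (act : V → ℍ[F, a, b]ˣ → V)
    (φ : (Bhat F a b)ˣ → V) : Prop :=
  ∀ u ∈ Uhat R, ∀ (γ : ℍ[F, a, b]ˣ) (y : (Bhat F a b)ˣ),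
    φ (u * y * gmap F a b γ) = act (φ y) γ

/-- `z` normalizes `R̂`. -/
def Normalizes (R : Subring ℍ[F, a, b]) (z : (Bhat F a b)ˣ) : Prop :=
  (fun w => ((z⁻¹ : (Bhat F a b)ˣ) : Bhat F a b) * w * (z : Bhat F a b)) ''
      ((Rhat R : Set (Bhat F a b))) = (Rhat R : Set (Bhat F a b))

/-- The order `R_x = B ∩ x⁻¹ R̂ x`. -/
def Rx (R : Subring ℍ[F, a, b]) (x : (Bhat F a b)ˣ) : Set ℍ[F, a, b] :=
  {w | ∃ r ∈ Rhat R, iotaB F a b w = ((x⁻¹ : (Bhat F a b)ˣ) : Bhat F a b) * r * (x : Bhat F a b)}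

/-- The unit group `R_x^×` inside `B^×`. -/
def RxUnits (R : Subring ℍ[F, a, b]) (x : (Bhat F a b)ˣ) : Set ℍ[F, a, b]ˣ :=
  {γ | ((γ : ℍ[F, a, b]) ∈ Rx R x) ∧ (((γ⁻¹ : ℍ[F, a, b]ˣ) : ℍ[F, a, b]) ∈ Rx R x)}

/-- `T` is a set of representatives for `Γ_x = R_x^×/𝒪^×`; in particular `t_x = T.card`. -/
def IsStabReps (R : Subring ℍ[F, a, b]) (x : (Bhat F a b)ˣ)
    (T : Finset ℍ[F, a, b]ˣ) : Prop :=
  ↑T ⊆ RxUnits R x ∧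
    ∀ γ ∈ RxUnits R x, ∃! γ' : ℍ[F, a, b]ˣ,
      γ' ∈ T ∧ ∃ ε ∈ OunitsB F a b, γ = γ' * ε

/-- `xs` is a set of representatives for `Cl(R) = R̂^× \ B̂^× / B^×`. -/
def IsClassReps (R : Subring ℍ[F, a, b]) (xs : Finset (Bhat F a b)ˣ) : Prop :=
  ∀ y : (Bhat F a b)ˣ, ∃! x : (Bhat F a b)ˣ,
    x ∈ xs ∧ ∃ u ∈ Uhat R, ∃ γ : ℍ[F, a, b]ˣ, y = u * x * gmap F a b γ

/-- The reduced norm of a quaternion over a commutative ring. -/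
def nrd {R : Type*} [CommRing R] {c₁ c₂ : R} (x : ℍ[R, c₁, c₂]) : R :=
  x.re ^ 2 - c₁ * x.imI ^ 2 - c₂ * x.imJ ^ 2 + c₁ * c₂ * x.imK ^ 2

/-- The set `H_𝔪 = {h ∈ B̂^× ∩ R̂ : Ô·n(h) ∩ 𝒪 = 𝔪}`. -/
def Hset (R : Subring ℍ[F, a, b]) (𝔪 : Ideal (𝓞 F)) : Set (Bhat F a b)ˣ :=
  {h | ((h : Bhat F a b) ∈ Rhat R) ∧
    {c : 𝓞 F | ∃ o ∈ intAdeles F,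
        algebraMap F (Adeles F) (algebraMap (𝓞 F) F c) = o * nrd (h : Bhat F a b)}
      = (𝔪 : Set (𝓞 F))}

/-- `T` is a set of representatives for the left cosets `R̂^× \ H_𝔪`. -/
def IsHeckeLeftReps (R : Subring ℍ[F, a, b]) (𝔪 : Ideal (𝓞 F))
    (T : Finset (Bhat F a b)ˣ) : Prop :=
  ↑T ⊆ Hset R 𝔪 ∧
    ∀ h ∈ Hset R 𝔪, ∃! h' : (Bhat F a b)ˣ, h' ∈ T ∧ ∃ u ∈ Uhat R, h = u * h'

/-- `T` is a set of representatives for the right cosets `H_𝔪 / R̂^×`. -/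
def IsHeckeRightReps (R : Subring ℍ[F, a, b]) (𝔪 : Ideal (𝓞 F))
    (T : Finset (Bhat F a b)ˣ) : Prop :=
  ↑T ⊆ Hset R 𝔪 ∧
    ∀ h ∈ Hset R 𝔪, ∃! h' : (Bhat F a b)ˣ, h' ∈ T ∧ ∃ u ∈ Uhat R, h = h' * u

end

section AuxLemmas

open NumberField Quaternion

variable {F : Type*} [Field F] [NumberField F] {a b : F}

lemma OunitsB_spec {ε : ℍ[F, a, b]ˣ} (hε : ε ∈ OunitsB F a b) :
    ∃ c : Fˣ, ε = Units.map (algebraMap F ℍ[F, a, b]).toMonoidHom c := by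
  obtain ⟨c, rfl⟩ := hε
  exact ⟨Units.map (algebraMap (𝓞 F) F).toMonoidHom c, Units.ext rfl⟩

lemma OunitsB_central {ε : ℍ[F, a, b]ˣ} (hε : ε ∈ OunitsB F a b) (γ : ℍ[F, a, b]ˣ) :
    γ * ε = ε * γ := by
  obtain ⟨c, rfl⟩ := OunitsB_spec hε
  exact Units.ext (Algebra.commutes (c : F) (γ : ℍ[F, a, b])).symm

lemma act_eps {V : Type*} [AddCommGroup V] [Module ℂ V]
    {act : V → ℍ[F, a, b]ˣ → V} (hact : IsWeightRep F a b act)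
    {ε : ℍ[F, a, b]ˣ} (hε : ε ∈ OunitsB F a b) (v : V) (γ : ℍ[F, a, b]ˣ) :
    act v (γ * ε) = act v γ := by
  obtain ⟨c, rfl⟩ := OunitsB_spec hε
  rw [← hact.2.1, hact.2.2.2]

lemma GammaSet.mul {R : Subring ℍ[F, a, b]} {x y z : (Bhat F a b)ˣ}
    {γ β : ℍ[F, a, b]ˣ} (hγ : γ ∈ GammaSet R x y) (hβ : β ∈ GammaSet R y z) :
    γ * β ∈ GammaSet R x z := by
  obtain ⟨u, hu, h1⟩ := hγ; obtain ⟨u', hu', h2⟩ := hβ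
  exact ⟨u * u', mul_mem hu hu', by rw [map_mul, h1, h2]; group⟩

lemma GammaSet.inv {R : Subring ℍ[F, a, b]} {x y : (Bhat F a b)ˣ}
    {γ : ℍ[F, a, b]ˣ} (hγ : γ ∈ GammaSet R x y) : γ⁻¹ ∈ GammaSet R y x := by
  obtain ⟨u, hu, h1⟩ := hγ
  exact ⟨u⁻¹, inv_mem hu, by rw [map_inv, h1]; group⟩

lemma gmap_val (γ : ℍ[F, a, b]ˣ) :
    ((gmap F a b γ : (Bhat F a b)ˣ) : Bhat F a b) = iotaB F a b (γ : ℍ[F, a, b]) := rfl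

lemma RxUnits_subset_Gamma {R : Subring ℍ[F, a, b]} {z : (Bhat F a b)ˣ} :
    RxUnits R z ⊆ GammaSet R z z := by
  rintro δ ⟨⟨r, hr, h1⟩, r', hr', h2⟩
  set ρ : (Bhat F a b)ˣ := z * gmap F a b δ * z⁻¹ with hρ
  have hρv : (ρ : Bhat F a b) = r := by
    have e : (ρ : Bhat F a b)
        = (z : Bhat F a b) * iotaB F a b (δ : ℍ[F, a, b]) * ((z⁻¹ : (Bhat F a b)ˣ) : Bhat F a b) :=
      rfl
    rw [e, h1]
    simp [mul_assoc]
  have hρiv : ((ρ⁻¹ : (Bhat F a b)ˣ) : Bhat F a b) = r' := by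
    have e0 : ρ⁻¹ = z * gmap F a b δ⁻¹ * z⁻¹ := by rw [hρ, map_inv]; group
    have e : ((ρ⁻¹ : (Bhat F a b)ˣ) : Bhat F a b)
        = (z : Bhat F a b) * iotaB F a b ((δ⁻¹ : ℍ[F, a, b]ˣ) : ℍ[F, a, b])
          * ((z⁻¹ : (Bhat F a b)ˣ) : Bhat F a b) := by rw [e0]; rfl
    rw [e, h2]
    simp [mul_assoc]
  have hρU : ρ ∈ Uhat R := by
    refine ⟨⟨⟨(ρ : Bhat F a b), hρv ▸ hr⟩, ⟨((ρ⁻¹ : (Bhat F a b)ˣ) : Bhat F a b), hρiv ▸ hr'⟩,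
      Subtype.ext ?_, Subtype.ext ?_⟩, Units.ext rfl⟩
    · exact ρ.mul_inv
    · exact ρ.inv_mul
  exact ⟨ρ, hρU, by rw [hρ]; group⟩

lemma Gamma_subset_RxUnits {R : Subring ℍ[F, a, b]} {z : (Bhat F a b)ˣ} :
    GammaSet R z z ⊆ RxUnits R z := by
  rintro δ ⟨u, ⟨w, hw⟩, h⟩
  have huv : (u : Bhat F a b) ∈ Rhat R := by rw [← hw]; exact (w : Rhat R).2
  have huiv : ((u⁻¹ : (Bhat F a b)ˣ) : Bhat F a b) ∈ Rhat R := by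
    rw [← hw, ← map_inv]; exact ((w⁻¹ : (Rhat R)ˣ) : Rhat R).2
  constructor
  · refine ⟨u, huv, ?_⟩
    have := congrArg Units.val h
    rw [gmap_val] at this
    exact this
  · refine ⟨(u⁻¹ : (Bhat F a b)ˣ), huiv, ?_⟩
    have h2 : gmap F a b δ⁻¹ = z⁻¹ * u⁻¹ * z := by rw [map_inv, h]; group
    have := congrArg Units.val h2
    rw [gmap_val] at this
    exact this

lemma sum_over_reps {M : Type*} [AddCommMonoid M]
    {A B : Set ℍ[F, a, b]ˣ} {S T : Finset ℍ[F, a, b]ˣ}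
    (hS1 : ↑S ⊆ A)
    (hS2 : ∀ γ ∈ A, ∃! γ' : ℍ[F, a, b]ˣ, γ' ∈ S ∧ ∃ ε ∈ OunitsB F a b, γ = γ' * ε)
    (hT1 : ↑T ⊆ B)
    (hT2 : ∀ γ ∈ B, ∃! γ' : ℍ[F, a, b]ˣ, γ' ∈ T ∧ ∃ ε ∈ OunitsB F a b, γ = γ' * ε)
    (m k : ℍ[F, a, b]ˣ) (hAB : ∀ γ ∈ A, m * γ * k ∈ B) (hBA : ∀ δ ∈ B, m⁻¹ * δ * k⁻¹ ∈ A)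
    (h : ℍ[F, a, b]ˣ → M) (hinv : ∀ (γ : ℍ[F, a, b]ˣ), ∀ ε ∈ OunitsB F a b, h (γ * ε) = h γ) :
    ∑ α ∈ S, h (m * α * k) = ∑ δ ∈ T, h δ := by
  have hmem : ∀ α ∈ S, m * α * k ∈ B := fun α hα => hAB α (hS1 hα)
  refine Finset.sum_bij (fun α hα => (hT2 _ (hmem α hα)).choose) ?_ ?_ ?_ ?_
  · intro α hα
    exact (hT2 _ (hmem α hα)).choose_spec.1.1
  · intro α hα α' hα' heq
    have heq' : (hT2 _ (hmem α hα)).choose = (hT2 _ (hmem α' hα')).choose := heq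
    obtain ⟨⟨-, ε, hε, h1⟩, -⟩ := (hT2 _ (hmem α hα)).choose_spec
    obtain ⟨⟨-, ε', hε', h2⟩, -⟩ := (hT2 _ (hmem α' hα')).choose_spec
    rw [← heq'] at h2
    set c := (hT2 (m * α * k) (hmem α hα)).choose with hcdef
    have key : α' = α * (ε⁻¹ * ε') := by
      have hc : k * (ε⁻¹ * ε') * k⁻¹ = ε⁻¹ * ε' := by
        rw [OunitsB_central (mul_mem (inv_mem hε) hε') k]
        group
      calc α' = m⁻¹ * (m * α' * k) * k⁻¹ := by group
        _ = m⁻¹ * (c * ε') * k⁻¹ := by rw [h2]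
        _ = m⁻¹ * ((c * ε) * (ε⁻¹ * ε')) * k⁻¹ := by group
        _ = m⁻¹ * ((m * α * k) * (ε⁻¹ * ε')) * k⁻¹ := by rw [← h1]
        _ = α * (k * (ε⁻¹ * ε') * k⁻¹) := by group
        _ = α * (ε⁻¹ * ε') := by rw [hc]
    obtain ⟨c, -, huniq⟩ := hS2 α' (hS1 hα')
    have r1 : α' = c := huniq α' ⟨hα', 1, one_mem _, (mul_one α').symm⟩
    have r2 : α = c := huniq α ⟨hα, ε⁻¹ * ε', mul_mem (inv_mem hε) hε', key⟩
    exact r2.trans r1.symm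
  · intro δ hδ
    have hδB := hT1 hδ
    obtain ⟨α, ⟨hαS, ε, hε, hαε⟩, -⟩ := hS2 _ (hBA δ hδB)
    refine ⟨α, hαS, ?_⟩
    obtain ⟨-, huniqT⟩ := (hT2 _ (hmem α hαS)).choose_spec
    have hc : ε * k = k * ε := (OunitsB_central hε k).symm
    have hδ2 : δ = m * α * k * ε := by
      calc δ = m * (m⁻¹ * δ * k⁻¹) * k := by group
        _ = m * (α * ε) * k := by rw [hαε]
        _ = m * α * (ε * k) := by group
        _ = m * α * (k * ε) := by rw [hc]
        _ = m * α * k * ε := by group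
    exact (huniqT δ ⟨hδ, ε⁻¹, inv_mem hε, by rw [hδ2]; group⟩).symm
  · intro α hα
    obtain ⟨⟨-, ε, hε, h1⟩, -⟩ := (hT2 _ (hmem α hα)).choose_spec
    exact (congrArg h h1).trans (hinv _ ε hε)

end AuxLemmas

/-- `⟨⟨φ_{x,v}, φ_{y,w}⟩⟩ = Σ_{γ ∈ Γ_{x,y}} ⟨v·γ, w⟩`. -/
theorem statement_11
    {F : Type*} [Field F] [NumberField F]
    (htr : ∀ φ : F →+* ℂ, ∀ x : F, (φ x).im = 0)
    {a b : F} (ha0 : a ≠ 0) (hb0 : b ≠ 0)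
    (ha : ∀ τ : F →+* ℝ, τ a < 0) (hb : ∀ τ : F →+* ℝ, τ b < 0)
    (R : Subring ℍ[F, a, b])
    (hRO : ∀ c : NumberField.RingOfIntegers F,
      algebraMap F ℍ[F, a, b] (algebraMap (NumberField.RingOfIntegers F) F c) ∈ R)
    (hRfg : (Submodule.span (NumberField.RingOfIntegers F) (R : Set ℍ[F, a, b])).FG)
    (hRspan : Submodule.span F (R : Set ℍ[F, a, b]) = ⊤)
    {V : Type*} [AddCommGroup V] [Module ℂ V]
    (act : V → ℍ[F, a, b]ˣ → V) (hact : IsWeightRep F a b act)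

    (herm : V → V → ℂ)
    (herm_add : ∀ v₁ v₂ w : V, herm (v₁ + v₂) w = herm v₁ w + herm v₂ w)
    (herm_smul : ∀ (c : ℂ) (v w : V), herm (c • v) w = c * herm v w)
    (herm_conj : ∀ v w : V, herm w v = starRingEnd ℂ (herm v w))
    (herm_pos : ∀ v : V, v ≠ 0 → 0 < (herm v v).re)
    (herm_unitary : ∀ (v w : V) (γ : ℍ[F, a, b]ˣ), herm (act v γ) (act w γ) = herm v w)
    (x y : (Bhat F a b)ˣ) (v w : V)
    (xs : Finset (Bhat F a b)ˣ) (hcl : IsClassReps R xs)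
    (Tx : (Bhat F a b)ˣ → Finset ℍ[F, a, b]ˣ)
    (hTx : ∀ z ∈ xs, IsStabReps R z (Tx z))
    (hstab : ∀ z : (Bhat F a b)ˣ, ∃ T : Finset ℍ[F, a, b]ˣ, IsStabReps R z T)
    (hfinx : ∀ z : (Bhat F a b)ˣ, ∃ T : Finset ℍ[F, a, b]ˣ, IsGammaReps R x z T)
    (hfiny : ∀ z : (Bhat F a b)ˣ, ∃ T : Finset ℍ[F, a, b]ˣ, IsGammaReps R y z T)
    (φx : (Bhat F a b)ˣ → V) (hφx : IsPhi R act x v φx)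
    (φy : (Bhat F a b)ˣ → V) (hφy : IsPhi R act y w φy)
    (T : Finset ℍ[F, a, b]ˣ) (hT : IsGammaReps R x y T) :
    ∑ z ∈ xs, ((Tx z).card : ℂ)⁻¹ * herm (φx z) (φy z)
      = ∑ γ ∈ T, herm (act v γ) w := by
  classical
  -- Basic facts about the Hermitian pairing
  have herm_zero_left : ∀ w0 : V, herm 0 w0 = 0 := by
    intro w0
    have h := herm_add 0 0 w0
    rw [add_zero] at h
    have : herm 0 w0 + herm 0 w0 = herm 0 w0 + 0 := by rw [← h, add_zero]
    exact add_left_cancel this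
  have herm_zero_right : ∀ v0 : V, herm v0 0 = 0 := by
    intro v0
    rw [herm_conj 0 v0, herm_zero_left, map_zero]
  have herm_sum_left : ∀ (s : Finset ℍ[F, a, b]ˣ) (f : ℍ[F, a, b]ˣ → V) (w0 : V),
      herm (∑ i ∈ s, f i) w0 = ∑ i ∈ s, herm (f i) w0 := by
    intro s f w0
    induction s using Finset.induction_on with
    | empty => simp [herm_zero_left]
    | insert _ _ hni ih => rw [Finset.sum_insert hni, Finset.sum_insert hni, herm_add, ih]
  have herm_sum_right : ∀ (s : Finset ℍ[F, a, b]ˣ) (v0 : V) (g : ℍ[F, a, b]ˣ → V),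
      herm v0 (∑ i ∈ s, g i) = ∑ i ∈ s, herm v0 (g i) := by
    intro s v0 g
    rw [herm_conj (∑ i ∈ s, g i) v0, herm_sum_left, map_sum]
    exact Finset.sum_congr rfl fun i _ => (herm_conj (g i) v0).symm
  -- the distinguished class representative
  obtain ⟨z₀, ⟨hz₀xs, u₀, hu₀, γ₀, hyz⟩, huniq⟩ := hcl y
  have hγ₀ : γ₀⁻¹ ∈ GammaSet R y z₀ := by
    refine ⟨u₀, hu₀, ?_⟩
    rw [map_inv, hyz]
    group
  have hempty : ∀ z ∈ xs, z ≠ z₀ → GammaSet R y z = ∅ := by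
    intro z hz hne
    ext β
    simp only [Set.mem_empty_iff_false, iff_false]
    rintro ⟨u, hu, hβ⟩
    exact hne (huniq z ⟨hz, u, hu, β⁻¹, by rw [map_inv, hβ]; group⟩)
  have hzero : ∀ z ∈ xs, z ≠ z₀ →
      ((Tx z).card : ℂ)⁻¹ * herm (φx z) (φy z) = 0 := by
    intro z hz hne
    obtain ⟨Sy, hSy, hval⟩ := hφy z
    have hSyempty : Sy = ∅ := Finset.eq_empty_of_forall_notMem fun β hβ => by
      have hmem := hSy.1 hβ
      rw [hempty z hz hne] at hmem
      exact hmem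
    rw [hval, hSyempty, Finset.sum_empty, herm_zero_right, mul_zero]
  rw [Finset.sum_eq_single_of_mem z₀ hz₀xs hzero]
  obtain ⟨Sx, hSx, hvalx⟩ := hφx z₀
  obtain ⟨Sy, hSy, hvaly⟩ := hφy z₀
  obtain ⟨β₀, ⟨hβ₀Sy, -⟩, -⟩ := hSy.2 γ₀⁻¹ hγ₀
  have hβmem : ∀ β ∈ Sy, β ∈ GammaSet R y z₀ := fun β hβ => hSy.1 hβ
  -- inner sum over Sx equals sum over T
  have key1 : ∀ β ∈ Sy, ∑ α ∈ Sx, herm (act v α) (act w β) = ∑ γ ∈ T, herm (act v γ) w := by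
    intro β hβ
    have h1 : ∀ α : ℍ[F, a, b]ˣ, herm (act v α) (act w β) = herm (act v (α * β⁻¹)) w := by
      intro α
      have e : act v α = act (act v (α * β⁻¹)) β := by
        rw [hact.2.1, inv_mul_cancel_right]
      rw [e, herm_unitary]
    calc ∑ α ∈ Sx, herm (act v α) (act w β)
        = ∑ α ∈ Sx, herm (act v (1 * α * β⁻¹)) w := by
          refine Finset.sum_congr rfl fun α _ => ?_
          rw [h1, one_mul]
      _ = ∑ γ ∈ T, herm (act v γ) w := by
          refine sum_over_reps hSx.1 hSx.2 hT.1 hT.2 1 β⁻¹ ?_ ?_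
            (fun γ => herm (act v γ) w) ?_
          · intro γ hγ
            rw [one_mul]
            exact GammaSet.mul hγ (GammaSet.inv (hβmem β hβ))
          · intro δ hδ
            rw [inv_one, one_mul, inv_inv]
            exact GammaSet.mul hδ (hβmem β hβ)
          · intro γ ε hε
            show herm (act v (γ * ε)) w = herm (act v γ) w
            rw [act_eps hact hε]
  -- cardinality comparison
  have key2 : (Sy.card : ℂ) = ((Tx z₀).card : ℂ) := by
    have hAB : ∀ γ ∈ GammaSet R y z₀, β₀⁻¹ * γ * 1 ∈ RxUnits R z₀ := by
      intro γ hγ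
      rw [mul_one]
      exact Gamma_subset_RxUnits (GammaSet.mul (GammaSet.inv (hβmem β₀ hβ₀Sy)) hγ)
    have hBA : ∀ δ ∈ RxUnits R z₀, β₀⁻¹⁻¹ * δ * 1⁻¹ ∈ GammaSet R y z₀ := by
      intro δ hδ
      rw [inv_inv, inv_one, mul_one]
      exact GammaSet.mul (hβmem β₀ hβ₀Sy) (RxUnits_subset_Gamma hδ)
    have := sum_over_reps (M := ℂ) hSy.1 hSy.2 (hTx z₀ hz₀xs).1 (hTx z₀ hz₀xs).2
      β₀⁻¹ 1 hAB hBA (fun _ => (1 : ℂ)) (fun _ _ _ => rfl)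
    simpa using this
  -- `Tx z₀` is nonempty
  have hone : (1 : ℍ[F, a, b]ˣ) ∈ RxUnits R z₀ := by
    constructor <;>
    · refine ⟨1, one_mem _, ?_⟩
      simp
  obtain ⟨δ₀, ⟨hδ₀, -⟩, -⟩ := (hTx z₀ hz₀xs).2 1 hone
  have hcard : ((Tx z₀).card : ℂ) ≠ 0 := by
    have : (Tx z₀).card ≠ 0 := Finset.card_ne_zero_of_mem hδ₀
    exact_mod_cast this
  have hmain : herm (φx z₀) (φy z₀) = (Sy.card : ℂ) * ∑ γ ∈ T, herm (act v γ) w := by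
    rw [hvalx, hvaly, herm_sum_right]
    rw [Finset.sum_congr rfl fun β hβ =>
      (herm_sum_left Sx (fun α => act v α) (act w β)).trans (key1 β hβ)]
    rw [Finset.sum_const, nsmul_eq_mul]
  rw [hmain, key2, ← mul_assoc, inv_mul_cancel₀ hcard, one_mul]
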